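/- There is a bijective correspondence between quantum orthogonal arrays QOA(d², t+2, d, 2) whose first two subsystems are classical registers (i.e., the total state is Σ_{i,j} |ij⟩ ⊗ Φ_{i,j}) and t-GMOQLS(d): the reduced state on any pair of subsystems S of the (t+2)-partite state Σ_{i,j}|ij⟩⊗Φ_{i,j} is maximally mixed (equal to I_{d²}) for all S with |S|=2 if and only if the array (Φ_{i,j}) satisfies the three defining conditions of a t-GMOQLS(d). -/

import Mathlib

noncomputable section

/-- The inner product on a complex inner product space, as a function into `ℂ`. -/
def ip {E : Type*} [NormedAddCommGroup E] [InnerProductSpace ℂ E] (x y : E) : ℂ :=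
  inner ℂ x y

/-- The partial trace of `|ψ⟩⟨ψ'|` over the `t - 1` tensor factors other than `m`,
for `ψ, ψ' ∈ (ℂ^d)^{⊗t}` (modelled as `ℂ^{[d]^t}`): a `d × d` matrix acting on the
`m`-th factor. -/
def ptrace1 {t d : ℕ} (m : Fin t) (ψ ψ' : EuclideanSpace ℂ (Fin t → Fin d)) :
    Matrix (Fin d) (Fin d) ℂ :=
  fun a b => ∑ g : {i : Fin t // i ≠ m} → Fin d,
    ψ (fun i => if h : i = m then a else g ⟨i, h⟩) *
      star (ψ' (fun i => if h : i = m then b else g ⟨i, h⟩))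

/-- The partial trace of `|ψ⟩⟨ψ'|` over the `t - 2` tensor factors other than the two
distinct factors `m, m'`: a `d² × d²` matrix acting on the factors `m` and `m'`. -/
def ptrace2 {t d : ℕ} (m m' : Fin t) (ψ ψ' : EuclideanSpace ℂ (Fin t → Fin d)) :
    Matrix (Fin d × Fin d) (Fin d × Fin d) ℂ :=
  fun a b => ∑ g : {i : Fin t // i ≠ m ∧ i ≠ m'} → Fin d,
    ψ (fun i => if h : i = m then a.1 else if h' : i = m' then a.2 else g ⟨i, h, h'⟩) *
      star (ψ' (fun i => if h : i = m then b.1 else if h' : i = m' then b.2 else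
        g ⟨i, h, h'⟩))

/-- A set of generalized mutually orthogonal quantum Latin squares, `t`-GMOQLS(d):
a `d × d` array of states `ψ_{i,j} ∈ (ℂ^d)^{⊗t}` such that
(1) `⟨ψ_{i,j}, ψ_{i',j'}⟩ = δ_{ii'}δ_{jj'}`;
(2) for every subset of `t-1` tensor factors (equivalently, every remaining factor `m`),
`Σ_i Tr |ψ_{i,j}⟩⟨ψ_{i,j'}| = δ_{jj'} I_d` and `Σ_j Tr |ψ_{i,j}⟩⟨ψ_{i',j}| = δ_{ii'} I_d`;
(3) for every subset of `t-2` factors, `Σ_{i,j} Tr |ψ_{i,j}⟩⟨ψ_{i,j}| = I_{d²}`. -/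
def IsGMOQLS {t d : ℕ} (ψ : Fin d → Fin d → EuclideanSpace ℂ (Fin t → Fin d)) : Prop :=
  (∀ i j i' j', ip (ψ i j) (ψ i' j') = if i = i' ∧ j = j' then 1 else 0) ∧
  (∀ m : Fin t, ∀ j j', ∑ i, ptrace1 m (ψ i j) (ψ i j') =
    if j = j' then (1 : Matrix (Fin d) (Fin d) ℂ) else 0) ∧
  (∀ m : Fin t, ∀ i i', ∑ j, ptrace1 m (ψ i j) (ψ i' j) =
    if i = i' then (1 : Matrix (Fin d) (Fin d) ℂ) else 0) ∧
  (∀ m m' : Fin t, m ≠ m' → ∑ i, ∑ j, ptrace2 m m' (ψ i j) (ψ i j) =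
    (1 : Matrix (Fin d × Fin d) (Fin d × Fin d) ℂ))

/-- The amplitude of the `(t+2)`-partite state `|Φ⟩ = Σ_{i,j} |i⟩⊗|j⟩⊗|Φ_{i,j}⟩` at the
configuration `c : Fin (t+2) → Fin d` (the first two parties are classical registers
holding `i` and `j`). -/
def amp {t d : ℕ} (Φ : Fin d → Fin d → EuclideanSpace ℂ (Fin t → Fin d))
    (c : Fin (t + 2) → Fin d) : ℂ :=
  Φ (c 0) (c 1) (fun s => c s.succ.succ)

/-- The reduced density matrix of `|Φ⟩ = Σ_{i,j} |ij⟩⊗Φ_{i,j}` on the pair of parties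
`{p, q}` of the `t+2` parties, as a `d² × d²` matrix. -/
def rho2 {t d : ℕ} (Φ : Fin d → Fin d → EuclideanSpace ℂ (Fin t → Fin d))
    (p q : Fin (t + 2)) : Matrix (Fin d × Fin d) (Fin d × Fin d) ℂ :=
  fun a b => ∑ g : {r : Fin (t + 2) // r ≠ p ∧ r ≠ q} → Fin d,
    amp Φ (fun r => if h : r = p then a.1 else if h' : r = q then a.2 else g ⟨r, h, h'⟩) *
      star (amp Φ
        (fun r => if h : r = p then b.1 else if h' : r = q then b.2 else g ⟨r, h, h'⟩))

variable {t d : ℕ}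
lemma fin_one_ne_zero : (1 : Fin (t+2)) ≠ 0 := by simp [Fin.ext_iff]
lemma ss_ne_zero (s : Fin t) : (s.succ.succ : Fin (t+2)) ≠ 0 := Fin.succ_ne_zero _
lemma ss_ne_one (s : Fin t) : (s.succ.succ : Fin (t+2)) ≠ 1 := fun h =>
  Fin.succ_ne_zero s (Fin.succ_injective _ (h.trans Fin.succ_zero_eq_one.symm))
lemma ss_inj {s s' : Fin t} (h : (s.succ.succ : Fin (t+2)) = s'.succ.succ) : s = s' :=
  Fin.succ_injective _ (Fin.succ_injective _ h)
def unpk (r : Fin (t+2)) (h0 : r ≠ 0) (h1 : r ≠ 1) : Fin t :=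
  (r.pred h0).pred (fun h => h1 (by rw [← Fin.succ_pred r h0, h, Fin.succ_zero_eq_one]))
@[simp] lemma unpk_ss (s : Fin t) (h0 h1) : unpk s.succ.succ h0 h1 = s := by simp [unpk]
@[simp] lemma ss_unpk (r : Fin (t+2)) (h0 h1) : (unpk r h0 h1).succ.succ = r := by simp [unpk]
lemma cases3 (r : Fin (t+2)) : r = 0 ∨ r = 1 ∨ ∃ s : Fin t, r = s.succ.succ := by
  rcases Fin.eq_zero_or_eq_succ r with h | ⟨r', rfl⟩
  · exact Or.inl h
  rcases Fin.eq_zero_or_eq_succ r' with h | ⟨s, rfl⟩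
  · exact Or.inr (Or.inl (by rw [h, Fin.succ_zero_eq_one]))
  · exact Or.inr (Or.inr ⟨s, rfl⟩)

/-- reindexing equiv for the pair (0,1) -/
def EA : ({r : Fin (t+2) // r ≠ 0 ∧ r ≠ 1} → Fin d) ≃ (Fin t → Fin d) where
  toFun g s := g ⟨s.succ.succ, ss_ne_zero s, ss_ne_one s⟩
  invFun f r := f (unpk r.1 r.2.1 r.2.2)
  left_inv g := by funext r; exact congrArg g (Subtype.ext (ss_unpk r.1 r.2.1 r.2.2))
  right_inv f := by funext s; simp

/-- reindexing equiv for the pair (0, m.succ.succ) -/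
def EB (m : Fin t) :
    ({r : Fin (t+2) // r ≠ 0 ∧ r ≠ m.succ.succ} → Fin d)
      ≃ Fin d × ({s : Fin t // s ≠ m} → Fin d) where
  toFun g := (g ⟨1, fin_one_ne_zero, fun h => ss_ne_one m h.symm⟩,
    fun s => g ⟨s.1.succ.succ, ss_ne_zero _, fun h => s.2 (ss_inj h)⟩)
  invFun jf r := if h : r.1 = 1 then jf.1
    else jf.2 ⟨unpk r.1 r.2.1 h, fun e => r.2.2 (by rw [← ss_unpk r.1 r.2.1 h, e])⟩
  left_inv g := by
    funext r
    dsimp only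
    by_cases h : r.1 = 1
    · rw [dif_pos h]; exact congrArg g (Subtype.ext h.symm)
    · rw [dif_neg h]; exact congrArg g (Subtype.ext (ss_unpk r.1 r.2.1 h))
  right_inv jf := by
    dsimp only
    refine Prod.ext (by simp) ?_
    funext s
    simp [ss_ne_one s.1]

/-- reindexing equiv for the pair (1, m.succ.succ) -/
def EC (m : Fin t) :
    ({r : Fin (t+2) // r ≠ 1 ∧ r ≠ m.succ.succ} → Fin d)
      ≃ Fin d × ({s : Fin t // s ≠ m} → Fin d) where
  toFun g := (g ⟨0, fun h => fin_one_ne_zero h.symm, fun h => ss_ne_zero m h.symm⟩,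
    fun s => g ⟨s.1.succ.succ, ss_ne_one _, fun h => s.2 (ss_inj h)⟩)
  invFun jf r := if h : r.1 = 0 then jf.1
    else jf.2 ⟨unpk r.1 h r.2.1, fun e => r.2.2 (by rw [← ss_unpk r.1 h r.2.1, e])⟩
  left_inv g := by
    funext r
    dsimp only
    by_cases h : r.1 = 0
    · rw [dif_pos h]; exact congrArg g (Subtype.ext h.symm)
    · rw [dif_neg h]; exact congrArg g (Subtype.ext (ss_unpk r.1 h r.2.1))
  right_inv jf := by
    dsimp only
    refine Prod.ext (by simp) ?_
    funext s
    simp [ss_ne_zero s.1]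

/-- reindexing equiv for the pair (m.succ.succ, m'.succ.succ) -/
def ED (m m' : Fin t) :
    ({r : Fin (t+2) // r ≠ m.succ.succ ∧ r ≠ m'.succ.succ} → Fin d)
      ≃ Fin d × Fin d × ({s : Fin t // s ≠ m ∧ s ≠ m'} → Fin d) where
  toFun g := (g ⟨0, fun h => ss_ne_zero m h.symm, fun h => ss_ne_zero m' h.symm⟩,
    g ⟨1, fun h => ss_ne_one m h.symm, fun h => ss_ne_one m' h.symm⟩,
    fun s => g ⟨s.1.succ.succ, fun h => s.2.1 (ss_inj h), fun h => s.2.2 (ss_inj h)⟩)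
  invFun v r := if h0 : r.1 = 0 then v.1 else if h1 : r.1 = 1 then v.2.1
    else v.2.2 ⟨unpk r.1 h0 h1,
      fun e => r.2.1 (by rw [← ss_unpk r.1 h0 h1, e]),
      fun e => r.2.2 (by rw [← ss_unpk r.1 h0 h1, e])⟩
  left_inv g := by
    funext r
    dsimp only
    by_cases h0 : r.1 = 0
    · rw [dif_pos h0]; exact congrArg g (Subtype.ext h0.symm)
    by_cases h1 : r.1 = 1
    · rw [dif_neg h0, dif_pos h1]; exact congrArg g (Subtype.ext h1.symm)
    · rw [dif_neg h0, dif_neg h1]; exact congrArg g (Subtype.ext (ss_unpk r.1 h0 h1))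
  right_inv v := by
    dsimp only
    refine Prod.ext (by simp) (Prod.ext (by simp [fin_one_ne_zero]) ?_)
    funext s
    simp [ss_ne_zero s.1, ss_ne_one s.1]

variable (Φ : Fin d → Fin d → EuclideanSpace ℂ (Fin t → Fin d))

lemma key01 (x y : Fin d) (g : {r : Fin (t+2) // r ≠ 0 ∧ r ≠ 1} → Fin d) :
    amp Φ (fun r => if h : r = 0 then x else if h' : r = 1 then y else g ⟨r, h, h'⟩)
      = Φ x y (fun s => g ⟨s.succ.succ, ss_ne_zero s, ss_ne_one s⟩) := by
  unfold amp
  beta_reduce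
  rw [dif_pos rfl, dif_neg fin_one_ne_zero, dif_pos rfl]
  refine congrArg (fun f => Φ _ _ f) ?_
  funext s
  rw [dif_neg (ss_ne_zero s), dif_neg (ss_ne_one s)]

lemma rho2_01 (a b : Fin d × Fin d) :
    rho2 Φ 0 1 a b = ip (Φ b.1 b.2) (Φ a.1 a.2) := by
  unfold rho2
  refine (Fintype.sum_equiv EA _
    (fun f : Fin t → Fin d => Φ a.1 a.2 f * star (Φ b.1 b.2 f))
    (fun g => by
      rw [key01 Φ a.1 a.2 g, key01 Φ b.1 b.2 g]
      rfl)).trans ?_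
  simp [ip, PiLp.inner_apply, RCLike.inner_apply, mul_comm]

lemma key0s (m : Fin t) (x y : Fin d)
    (g : {r : Fin (t+2) // r ≠ 0 ∧ r ≠ m.succ.succ} → Fin d) :
    amp Φ (fun r => if h : r = 0 then x else if h' : r = m.succ.succ then y
        else g ⟨r, h, h'⟩)
      = Φ x (g ⟨1, fin_one_ne_zero, fun h => ss_ne_one m h.symm⟩)
        (fun i => if h : i = m then y
          else g ⟨i.succ.succ, ss_ne_zero i, fun e => h (ss_inj e)⟩) := by
  unfold amp
  beta_reduce
  rw [dif_pos rfl, dif_neg fin_one_ne_zero, dif_neg (fun h => ss_ne_one m h.symm)]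
  refine congrArg (fun f => Φ _ _ f) ?_
  funext s
  by_cases hs : s = m
  · rw [dif_neg (ss_ne_zero s), dif_pos (by rw [hs]), dif_pos hs]
  · rw [dif_neg (ss_ne_zero s), dif_neg (fun h => hs (ss_inj h)), dif_neg hs]

lemma rho2_0s (m : Fin t) (a b : Fin d × Fin d) :
    rho2 Φ 0 m.succ.succ a b = ∑ j, ptrace1 m (Φ a.1 j) (Φ b.1 j) a.2 b.2 := by
  unfold rho2
  refine (Fintype.sum_equiv (EB m) _
    (fun jf : Fin d × ({s : Fin t // s ≠ m} → Fin d) =>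
      Φ a.1 jf.1 (fun i => if h : i = m then a.2 else jf.2 ⟨i, h⟩) *
        star (Φ b.1 jf.1 (fun i => if h : i = m then b.2 else jf.2 ⟨i, h⟩)))
    (fun g => by
      rw [key0s Φ m a.1 a.2 g, key0s Φ m b.1 b.2 g]
      rfl)).trans ?_
  rw [Fintype.sum_prod_type]
  rfl

lemma key1s (m : Fin t) (x y : Fin d)
    (g : {r : Fin (t+2) // r ≠ 1 ∧ r ≠ m.succ.succ} → Fin d) :
    amp Φ (fun r => if h : r = 1 then x else if h' : r = m.succ.succ then y
        else g ⟨r, h, h'⟩)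
      = Φ (g ⟨0, fun h => fin_one_ne_zero h.symm, fun h => ss_ne_zero m h.symm⟩) x
        (fun i => if h : i = m then y
          else g ⟨i.succ.succ, ss_ne_one i, fun e => h (ss_inj e)⟩) := by
  unfold amp
  beta_reduce
  rw [dif_neg (fun h => fin_one_ne_zero h.symm), dif_neg (fun h => ss_ne_zero m h.symm),
    dif_pos rfl]
  refine congrArg (fun f => Φ _ _ f) ?_
  funext s
  by_cases hs : s = m
  · rw [dif_neg (ss_ne_one s), dif_pos (by rw [hs]), dif_pos hs]
  · rw [dif_neg (ss_ne_one s), dif_neg (fun h => hs (ss_inj h)), dif_neg hs]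

lemma rho2_1s (m : Fin t) (a b : Fin d × Fin d) :
    rho2 Φ 1 m.succ.succ a b = ∑ i, ptrace1 m (Φ i a.1) (Φ i b.1) a.2 b.2 := by
  unfold rho2
  refine (Fintype.sum_equiv (EC m) _
    (fun jf : Fin d × ({s : Fin t // s ≠ m} → Fin d) =>
      Φ jf.1 a.1 (fun i => if h : i = m then a.2 else jf.2 ⟨i, h⟩) *
        star (Φ jf.1 b.1 (fun i => if h : i = m then b.2 else jf.2 ⟨i, h⟩)))
    (fun g => by
      rw [key1s Φ m a.1 a.2 g, key1s Φ m b.1 b.2 g]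
      rfl)).trans ?_
  rw [Fintype.sum_prod_type]
  rfl

lemma keyss (m m' : Fin t) (x y : Fin d)
    (g : {r : Fin (t+2) // r ≠ m.succ.succ ∧ r ≠ m'.succ.succ} → Fin d) :
    amp Φ (fun r => if h : r = m.succ.succ then x else if h' : r = m'.succ.succ then y
        else g ⟨r, h, h'⟩)
      = Φ (g ⟨0, fun h => ss_ne_zero m h.symm, fun h => ss_ne_zero m' h.symm⟩)
        (g ⟨1, fun h => ss_ne_one m h.symm, fun h => ss_ne_one m' h.symm⟩)
        (fun i => if h : i = m then x else if h' : i = m' then y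
          else g ⟨i.succ.succ, fun e => h (ss_inj e), fun e => h' (ss_inj e)⟩) := by
  unfold amp
  beta_reduce
  rw [dif_neg (fun h => ss_ne_zero m h.symm), dif_neg (fun h => ss_ne_zero m' h.symm),
    dif_neg (fun h => ss_ne_one m h.symm), dif_neg (fun h => ss_ne_one m' h.symm)]
  refine congrArg (fun f => Φ _ _ f) ?_
  funext s
  by_cases hs : s = m
  · rw [dif_pos (by rw [hs]), dif_pos hs]
  by_cases hs' : s = m'
  · rw [dif_neg (fun h => hs (ss_inj h)), dif_pos (by rw [hs']), dif_neg hs, dif_pos hs']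
  · rw [dif_neg (fun h => hs (ss_inj h)), dif_neg (fun h => hs' (ss_inj h)),
      dif_neg hs, dif_neg hs']

lemma rho2_ss (m m' : Fin t) (a b : Fin d × Fin d) :
    rho2 Φ m.succ.succ m'.succ.succ a b
      = ∑ i, ∑ j, ptrace2 m m' (Φ i j) (Φ i j) a b := by
  unfold rho2
  refine (Fintype.sum_equiv (ED m m') _
    (fun v : Fin d × Fin d × ({s : Fin t // s ≠ m ∧ s ≠ m'} → Fin d) =>
      Φ v.1 v.2.1 (fun i => if h : i = m then a.1 else if h' : i = m' then a.2
          else v.2.2 ⟨i, h, h'⟩) *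
        star (Φ v.1 v.2.1 (fun i => if h : i = m then b.1 else if h' : i = m' then b.2
          else v.2.2 ⟨i, h, h'⟩)))
    (fun g => by
      rw [keyss Φ m m' a.1 a.2 g, keyss Φ m m' b.1 b.2 g]
      rfl)).trans ?_
  rw [Fintype.sum_prod_type]
  refine Finset.sum_congr rfl fun i _ => ?_
  rw [Fintype.sum_prod_type]
  rfl

def ESwap (p q : Fin (t+2)) :
    ({r : Fin (t+2) // r ≠ q ∧ r ≠ p} → Fin d) ≃ ({r : Fin (t+2) // r ≠ p ∧ r ≠ q} → Fin d) where
  toFun g r := g ⟨r.1, r.2.2, r.2.1⟩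
  invFun g r := g ⟨r.1, r.2.2, r.2.1⟩
  left_inv g := rfl
  right_inv g := rfl

lemma rho2_swap (p q : Fin (t+2)) (hpq : p ≠ q) (a b : Fin d × Fin d) :
    rho2 Φ q p a b = rho2 Φ p q (a.2, a.1) (b.2, b.1) := by
  unfold rho2
  refine Fintype.sum_equiv (ESwap p q) _ _ (fun g => ?_)
  dsimp only
  have harg : ∀ (x y : Fin d),
      (fun r => if h : r = q then x else if h' : r = p then y else g ⟨r, h, h'⟩)
        = (fun r : Fin (t+2) => if h : r = p then y else if h' : r = q then x
            else (ESwap p q) g ⟨r, h, h'⟩) := by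
    intro x y
    funext r
    by_cases h1 : r = q
    · rw [dif_pos h1, dif_neg (fun h => hpq (h.symm.trans h1)), dif_pos h1]
    by_cases h2 : r = p
    · rw [dif_neg h1, dif_pos h2, dif_pos h2]
    · rw [dif_neg h1, dif_neg h2, dif_neg h2, dif_neg h1]
      rfl
  rw [harg a.1 a.2, harg b.1 b.2]

/-- Correspondence between quantum orthogonal arrays `QOA(d², t+2, d, 2)` whose first
two subsystems are classical registers, `|Φ⟩ = Σ_{i,j} |ij⟩ ⊗ Φ_{i,j}`, and
`t`-GMOQLS(d): the reduction of `|Φ⟩` to any two of the `t+2` parties is maximally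
mixed (equals `I_{d²}`) if and only if the array `(Φ_{i,j})` satisfies the three
defining conditions of a `t`-GMOQLS(d). -/
theorem qoa_iff_gmoqls {t d : ℕ}
    (Φ : Fin d → Fin d → EuclideanSpace ℂ (Fin t → Fin d)) :
    (∀ p q : Fin (t + 2), p ≠ q →
      rho2 Φ p q = (1 : Matrix (Fin d × Fin d) (Fin d × Fin d) ℂ)) ↔
    IsGMOQLS Φ := by
  constructor
  · intro h
    refine ⟨?_, ?_, ?_, ?_⟩
    · intro i j i' j'
      have e := rho2_01 Φ (i', j') (i, j)
      dsimp only at e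
      rw [← e, h 0 1 (fun hh => fin_one_ne_zero hh.symm), Matrix.one_apply]
      by_cases hc : i = i' ∧ j = j'
      · obtain ⟨rfl, rfl⟩ := hc; simp
      · rw [if_neg hc, if_neg (fun hh => hc
          ⟨(Prod.ext_iff.mp hh).1.symm, (Prod.ext_iff.mp hh).2.symm⟩)]
    · intro m j j'
      ext x y
      have e := rho2_1s Φ m (j, x) (j', y)
      dsimp only at e
      rw [Matrix.sum_apply, ← e, h 1 m.succ.succ (fun hh => ss_ne_one m hh.symm),
        Matrix.one_apply]
      by_cases hj : j = j'
      · subst hj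
        rw [if_pos rfl, Matrix.one_apply]
        simp [Prod.ext_iff]
      · rw [if_neg hj, if_neg (fun hh => hj (Prod.ext_iff.mp hh).1)]
        simp
    · intro m i i'
      ext x y
      have e := rho2_0s Φ m (i, x) (i', y)
      dsimp only at e
      rw [Matrix.sum_apply, ← e, h 0 m.succ.succ (fun hh => ss_ne_zero m hh.symm),
        Matrix.one_apply]
      by_cases hi : i = i'
      · subst hi
        rw [if_pos rfl, Matrix.one_apply]
        simp [Prod.ext_iff]
      · rw [if_neg hi, if_neg (fun hh => hi (Prod.ext_iff.mp hh).1)]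
        simp
    · intro m m' hmm
      ext a b
      simp only [Matrix.sum_apply]
      rw [← rho2_ss Φ m m' a b, h m.succ.succ m'.succ.succ (fun hh => hmm (ss_inj hh))]
  · rintro ⟨h1, h2, h3, h4⟩
    have K01 : rho2 Φ 0 1 = 1 := by
      ext a b
      rw [rho2_01, h1]
      by_cases hab : a = b
      · subst hab; simp
      · rw [if_neg (fun hh => hab (Prod.ext hh.1.symm hh.2.symm)),
          Matrix.one_apply, if_neg hab]
    have K0s : ∀ m : Fin t, rho2 Φ 0 m.succ.succ = 1 := by
      intro m
      ext a b
      rw [rho2_0s]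
      have e := congrFun (congrFun (h3 m a.1 b.1) a.2) b.2
      rw [Matrix.sum_apply] at e
      rw [e]
      by_cases ha : a.1 = b.1 <;> simp [ha, Matrix.one_apply, Prod.ext_iff]
    have K1s : ∀ m : Fin t, rho2 Φ 1 m.succ.succ = 1 := by
      intro m
      ext a b
      rw [rho2_1s]
      have e := congrFun (congrFun (h2 m a.1 b.1) a.2) b.2
      rw [Matrix.sum_apply] at e
      rw [e]
      by_cases ha : a.1 = b.1 <;> simp [ha, Matrix.one_apply, Prod.ext_iff]
    have Kss : ∀ m m' : Fin t, m ≠ m' → rho2 Φ m.succ.succ m'.succ.succ = 1 := by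
      intro m m' hmm
      ext a b
      rw [rho2_ss]
      have e := congrFun (congrFun (h4 m m' hmm) a) b
      simp only [Matrix.sum_apply] at e
      rw [e]
    have comm : ∀ p q, p ≠ q → rho2 Φ p q = 1 → rho2 Φ q p = 1 := by
      intro p q hpq hone
      ext a b
      rw [rho2_swap Φ p q hpq, hone]
      by_cases hab : a = b
      · subst hab; simp
      · rw [Matrix.one_apply, if_neg (fun hh => hab (Prod.ext
          (congrArg Prod.snd hh) (congrArg Prod.fst hh))), Matrix.one_apply, if_neg hab]
    intro p q hpq
    rcases cases3 p with rfl | rfl | ⟨m, rfl⟩ <;> rcases cases3 q with rfl | rfl | ⟨m', rfl⟩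
    · exact absurd rfl hpq
    · exact K01
    · exact K0s m'
    · exact comm 0 1 (fun e => hpq e.symm) K01
    · exact absurd rfl hpq
    · exact K1s m'
    · exact comm 0 m.succ.succ (fun e => ss_ne_zero m e.symm) (K0s m)
    · exact comm 1 m.succ.succ (fun e => ss_ne_one m e.symm) (K1s m)
    · exact Kss m m' (fun e => hpq (by rw [e]))
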